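/- For 0 < r < s < 1, let p = ((r+s)/(1+rs), √((1−r²)(1−s²))/(1+rs)) regarded as the complex number ((r+s) + i√((1−r²)(1−s²)))/(1+rs). Then |p| = 1, the circle through r, s and p with center (r+s)/2 + i√((1−r²)(1−s²))/2 and radius (1−rs)/2 is internally tangent to the unit circle at p, and the angle ∠(r, p, s) at vertex p satisfies ∠(r, p, s) = arcsin((s−r)/(1−rs)). -/

import Mathlib

open Complex EuclideanGeometry

set_option maxHeartbeats 1600000 in
theorem tangent_circle_radial_points (r s : ℝ) (h0r : 0 < r) (hrs : r < s) (hs1 : s < 1) :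
    let d : ℝ := Real.sqrt ((1 - r ^ 2) * (1 - s ^ 2))
    let p : ℂ := (((r + s : ℝ) : ℂ) + Complex.I * (d : ℂ)) / ((1 + r * s : ℝ) : ℂ)
    let c : ℂ := (((r + s) / 2 : ℝ) : ℂ) + Complex.I * ((d / 2 : ℝ) : ℂ)
    ‖p‖ = 1 ∧
      ‖(r : ℂ) - c‖ = (1 - r * s) / 2 ∧
      ‖(s : ℂ) - c‖ = (1 - r * s) / 2 ∧
      ‖p - c‖ = (1 - r * s) / 2 ∧
      (∀ z : ℂ, ‖z - c‖ = (1 - r * s) / 2 → ‖z‖ ≤ 1) ∧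
      EuclideanGeometry.angle (r : ℂ) p (s : ℂ) = Real.arcsin ((s - r) / (1 - r * s)) := by
  intro d p c
  have hr1 : r < 1 := hrs.trans hs1
  have h0s : 0 < s := h0r.trans hrs
  have hrs1 : r * s < 1 := by nlinarith
  have ht : (0:ℝ) < 1 + r * s := by nlinarith
  have htne : ((1 + r * s : ℝ) : ℂ) ≠ 0 := by
    exact_mod_cast Complex.ofReal_ne_zero.2 (ne_of_gt ht)
  have htc : (1 + (r:ℂ) * s) ≠ 0 := by
    have := htne; push_cast at this; exact this
  have hd0 : 0 ≤ d := Real.sqrt_nonneg _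
  have h1r2 : (0:ℝ) < 1 - r ^ 2 := by nlinarith
  have h1s2 : (0:ℝ) < 1 - s ^ 2 := by nlinarith
  have hdsq : d ^ 2 = (1 - r ^ 2) * (1 - s ^ 2) := by
    rw [show d = Real.sqrt ((1 - r ^ 2) * (1 - s ^ 2)) from rfl]
    exact Real.sq_sqrt (by positivity)
  -- abs helper
  have habs : ∀ (z : ℂ) (e : ℝ), 0 ≤ e → z.re ^ 2 + z.im ^ 2 = e ^ 2 → ‖z‖ = e := by
    intro z e he h
    rw [Complex.norm_def, Complex.normSq_apply, ← pow_two, ← pow_two]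
    rw [h, Real.sqrt_sq he]
  have hcre : c.re = (r + s) / 2 := by simp [c]
  have hcim : c.im = d / 2 := by simp [c]
  have hcabs : ‖c‖ = (1 + r * s) / 2 := by
    apply habs _ _ (by positivity)
    rw [hcre, hcim]; nlinarith
  -- p = (2/(1+rs)) * c
  have hpc : p = (((2 / (1 + r * s) : ℝ)) : ℂ) * c := by
    rw [show p = (((r + s : ℝ) : ℂ) + Complex.I * (d : ℂ)) / ((1 + r * s : ℝ) : ℂ) from rfl,
      show c = (((r + s) / 2 : ℝ) : ℂ) + Complex.I * ((d / 2 : ℝ) : ℂ) from rfl]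
    push_cast
    field_simp [htc]
  have hpabs : ‖p‖ = 1 := by
    rw [hpc, norm_mul, hcabs, Complex.norm_real, Real.norm_eq_abs, abs_of_pos (div_pos (by linarith) ht)]
    field_simp
  refine ⟨hpabs, ?_, ?_, ?_, ?_, ?_⟩
  · apply habs _ _ (by nlinarith)
    simp [hcre, hcim]; nlinarith
  · apply habs _ _ (by nlinarith)
    simp [hcre, hcim]; nlinarith
  · have : p - c = (((1 - r * s) / (1 + r * s) : ℝ) : ℂ) * c := by
      rw [hpc]; push_cast; field_simp [htc]; ring
    rw [this, norm_mul, hcabs, Complex.norm_real, Real.norm_eq_abs,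
      abs_of_pos (div_pos (by linarith) ht)]
    field_simp
  · intro z hz
    calc ‖z‖ = ‖(z - c) + c‖ := by ring_nf
      _ ≤ ‖z - c‖ + ‖c‖ := norm_add_le _ _
      _ = 1 := by rw [hz, hcabs]; ring
  · -- angle
    have hd : 0 < d := Real.sqrt_pos.2 (by positivity)
    have hone : (0:ℝ) < 1 - r * s := by linarith
    have habs2 : ∀ a b e : ℝ, 0 ≤ e → a ^ 2 + b ^ 2 = e ^ 2 →
        ‖(a : ℂ) + Complex.I * (b : ℂ)‖ = e := by
      intro a b e he h
      apply habs _ _ he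
      simp [h]
    have hu : ((r:ℂ) - p) * ((1 + r * s : ℝ) : ℂ) =
        (((r ^ 2 * s - s : ℝ) : ℂ) + Complex.I * ((-d : ℝ) : ℂ)) := by
      rw [show p = (((r + s : ℝ) : ℂ) + Complex.I * (d : ℂ)) / ((1 + r * s : ℝ) : ℂ) from rfl]
      push_cast; field_simp [htc]; ring
    have hv : ((s:ℂ) - p) * ((1 + r * s : ℝ) : ℂ) =
        (((r * s ^ 2 - r : ℝ) : ℂ) + Complex.I * ((-d : ℝ) : ℂ)) := by
      rw [show p = (((r + s : ℝ) : ℂ) + Complex.I * (d : ℂ)) / ((1 + r * s : ℝ) : ℂ) from rfl,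
        sub_mul, div_mul_cancel₀ _ htne]
      push_cast; ring
    clear_value d p c
    -- norms
    have hPu : ‖(r:ℂ) - p‖ * (1 + r * s) =
        Real.sqrt ((1 - r ^ 2) * (1 - r * s) * (1 + r * s)) := by
      have h1 := congrArg (‖·‖) hu
      rw [norm_mul, Complex.norm_real, Real.norm_eq_abs, abs_of_pos ht] at h1
      rw [h1]
      apply habs2 _ _ _ (Real.sqrt_nonneg _)
      rw [Real.sq_sqrt (by positivity)]
      linear_combination hdsq
    have hPv : ‖(s:ℂ) - p‖ * (1 + r * s) =
        Real.sqrt ((1 - s ^ 2) * (1 - r * s) * (1 + r * s)) := by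
      have h1 := congrArg (‖·‖) hv
      rw [norm_mul, Complex.norm_real, Real.norm_eq_abs, abs_of_pos ht] at h1
      rw [h1]
      apply habs2 _ _ _ (Real.sqrt_nonneg _)
      rw [Real.sq_sqrt (by positivity)]
      linear_combination hdsq
    have hprod : ‖(r:ℂ) - p‖ * ‖(s:ℂ) - p‖ = d * (1 - r * s) / (1 + r * s) := by
      have h1 : (‖(r:ℂ) - p‖ * (1 + r * s)) * (‖(s:ℂ) - p‖ * (1 + r * s)) =
          d * (1 - r * s) * (1 + r * s) := by
        rw [hPu, hPv, ← Real.sqrt_mul (by positivity)]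
        have h2 : (1 - r ^ 2) * (1 - r * s) * (1 + r * s) * ((1 - s ^ 2) * (1 - r * s) * (1 + r * s)) =
            (d * ((1 - r * s) * (1 + r * s))) ^ 2 := by
          rw [mul_pow, hdsq]; ring
        rw [h2, Real.sqrt_sq (by positivity)]; ring
      have h3 : ‖(r:ℂ) - p‖ * ‖(s:ℂ) - p‖ * ((1 + r * s) * (1 + r * s)) =
          d * (1 - r * s) / (1 + r * s) * ((1 + r * s) * (1 + r * s)) := by
        rw [show ‖(r:ℂ) - p‖ * ‖(s:ℂ) - p‖ * ((1 + r * s) * (1 + r * s)) =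
          (‖(r:ℂ) - p‖ * (1 + r * s)) * (‖(s:ℂ) - p‖ * (1 + r * s)) from by
            ring, h1]
        field_simp
      exact mul_right_cancel₀ (by positivity) h3
    -- inner product
    have hinner : (inner ℝ ((r:ℂ) - p) ((s:ℂ) - p) : ℝ) = d ^ 2 / (1 + r * s) := by
      rw [Complex.inner]
      have h3 : (starRingEnd ℂ) ((r:ℂ) - p) * ((s:ℂ) - p) * (((1 + r * s) ^ 2 : ℝ) : ℂ) =
          (starRingEnd ℂ) (((r ^ 2 * s - s : ℝ) : ℂ) + Complex.I * ((-d : ℝ) : ℂ)) *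
          (((r * s ^ 2 - r : ℝ) : ℂ) + Complex.I * ((-d : ℝ) : ℂ)) := by
        rw [← hu, ← hv, map_mul, Complex.conj_ofReal]
        push_cast; ring
      have h5 : (starRingEnd ℂ) (((r ^ 2 * s - s : ℝ) : ℂ) + Complex.I * ((-d : ℝ) : ℂ)) *
          (((r * s ^ 2 - r : ℝ) : ℂ) + Complex.I * ((-d : ℝ) : ℂ)) =
          ((((r ^ 2 * s - s) * (r * s ^ 2 - r) + d * d : ℝ)) : ℂ) +
          Complex.I * ((((r ^ 2 * s - s) * (-d) + d * (r * s ^ 2 - r) : ℝ)) : ℂ) := by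
        rw [map_add, map_mul, Complex.conj_ofReal, Complex.conj_ofReal, Complex.conj_I]
        push_cast; ring_nf
        rw [Complex.I_sq]; ring
      rw [h5] at h3
      have h6 := congrArg Complex.re h3
      rw [Complex.mul_re] at h6
      simp only [Complex.add_re, Complex.add_im, Complex.ofReal_re, Complex.ofReal_im,
        Complex.mul_re, Complex.mul_im, Complex.I_re, Complex.I_im] at h6
      have h7 : ((starRingEnd ℂ) ((r:ℂ) - p) * ((s:ℂ) - p)).re * ((1 + r * s) ^ 2) =
          d ^ 2 / (1 + r * s) * ((1 + r * s) ^ 2) := by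
        rw [Complex.mul_re,
          show d ^ 2 / (1 + r * s) * (1 + r * s) ^ 2 = d ^ 2 * (1 + r * s) from by field_simp]
        linear_combination h6 - r * s * hdsq
      rw [mul_comm ((s:ℂ) - p)]
      exact mul_right_cancel₀ (b := (1 + r * s) ^ 2) (by positivity) h7
    have hcos : EuclideanGeometry.angle (r : ℂ) p (s : ℂ) = Real.arccos (d / (1 - r * s)) := by
      unfold EuclideanGeometry.angle InnerProductGeometry.angle
      rw [vsub_eq_sub, vsub_eq_sub, hinner, hprod]
      congr 1
      rw [div_div_div_eq]
      rw [show d ^ 2 * (1 + r * s) = d * (d * (1 + r * s)) from by ring,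
        show (1 + r * s) * (d * (1 - r * s)) = (1 - r * s) * (d * (1 + r * s)) from by ring]
      rw [mul_div_mul_right _ _ (by positivity)]
    rw [hcos, Real.arcsin_eq_arccos (div_nonneg (by linarith) (by linarith))]
    congr 1
    have h8 : 1 - ((s - r) / (1 - r * s)) ^ 2 = (d / (1 - r * s)) ^ 2 := by
      rw [div_pow, div_pow, hdsq, eq_div_iff (by positivity), sub_mul,
        div_mul_cancel₀ _ (by positivity)]; ring
    rw [h8, Real.sqrt_sq (by positivity)]
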